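/- For the blurred-saturated detector coarse graining Λ_CG and the evolution |ψ_t⟩ = e^{−iJt}(c_{00}|00⟩ + c_{11}|11⟩) + e^{iJt}(c_{01}|01⟩ + c_{10}|10⟩), the effective state ρ_t = Λ_CG(|ψ_t⟩⟨ψ_t|) equals [[|c_{00}|², c_{00}(e^{−2iJt}(c̄_{01}+c̄_{10})+c̄_{11})/√3],[c̄_{00}(e^{2iJt}(c_{01}+c_{10})+c_{11})/√3, |c_{01}|²+|c_{10}|²+|c_{11}|²]]. -/
import Mathlib
open Matrix

noncomputable def Kdet : Fin 4 → Matrix (Fin 2) (Fin 4) ℂ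
  | 0 => !![1, 0, 0, 0; 0, 1/Real.sqrt 3, 1/Real.sqrt 3, 1/Real.sqrt 3]
  | 1 => !![0, 0, 0, 0; 0, 1/Real.sqrt 3, 0, -(1/Real.sqrt 3)]
  | 2 => !![0, 0, 0, 0; 0, 1/Real.sqrt 3, -(1/Real.sqrt 3), 0]
  | 3 => !![0, 0, 0, 0; 0, 0, 1/Real.sqrt 3, -(1/Real.sqrt 3)]

noncomputable def psiT (J t : ℝ) (c : Fin 4 → ℂ) : Fin 4 → ℂ
  | 0 => Complex.exp (-(Complex.I * J * t)) * c 0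
  | 1 => Complex.exp (Complex.I * J * t) * c 1
  | 2 => Complex.exp (Complex.I * J * t) * c 2
  | 3 => Complex.exp (-(Complex.I * J * t)) * c 3

set_option maxHeartbeats 1000000 in
/-- The effective state seen by the blurred-and-saturated detector for the
Ising-evolved pure state. -/
theorem effective_state_evolution (J t : ℝ) (c : Fin 4 → ℂ)
    (hc : ∑ k, c k * star (c k) = 1) :
    ∑ i, Kdet i * Matrix.vecMulVec (psiT J t c) (star (psiT J t c)) *
        (Kdet i)ᴴ =
      !![c 0 * star (c 0),
         c 0 * (Complex.exp (-(2 * Complex.I * J * t)) *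
           (star (c 1) + star (c 2)) + star (c 3)) / Real.sqrt 3;
         star (c 0) * (Complex.exp (2 * Complex.I * J * t) *
           (c 1 + c 2) + c 3) / Real.sqrt 3,
         c 1 * star (c 1) + c 2 * star (c 2) + c 3 * star (c 3)] := by
  have h3 : ((Real.sqrt 3 : ℂ))⁻¹ * ((Real.sqrt 3 : ℂ))⁻¹ = 1/3 := by
    rw [← mul_inv]
    norm_cast
    rw [Real.mul_self_sqrt (by norm_num : (0:ℝ) ≤ 3)]
    norm_num
  have h3p : ((Real.sqrt 3 : ℂ))⁻¹ ^ 2 = 1/3 := by rw [sq]; exact h3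
  have hc1 : (starRingEnd ℂ) (Complex.exp (Complex.I * J * t)) =
      Complex.exp (-(Complex.I * J * t)) := by
    rw [← Complex.exp_conj]; congr 1; simp [Complex.conj_I]
  have hc2 : (starRingEnd ℂ) (Complex.exp (-(Complex.I * J * t))) =
      Complex.exp (Complex.I * J * t) := by
    rw [← Complex.exp_conj]; congr 1; simp [Complex.conj_I]
  have hmul : Complex.exp (-(Complex.I * J * t)) * Complex.exp (Complex.I * J * t) = 1 := by
    rw [← Complex.exp_add]; simp
  have h2 : Complex.exp (2 * Complex.I * J * t) =
      Complex.exp (Complex.I * J * t) * Complex.exp (Complex.I * J * t) := by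
    rw [← Complex.exp_add]; congr 1; ring
  have h2' : Complex.exp (-(2 * Complex.I * J * t)) =
      Complex.exp (-(Complex.I * J * t)) * Complex.exp (-(Complex.I * J * t)) := by
    rw [← Complex.exp_add]; congr 1; ring
  ext i j
  fin_cases i <;> fin_cases j
  · simp [Kdet, psiT, Matrix.mul_apply, Matrix.vecMul, dotProduct,
      Fin.sum_univ_four, Matrix.vecMulVec_apply, star_mul', Complex.star_def,
      Complex.conj_ofReal, hc1, hc2, h2, h2', h3, h3p]
    linear_combination (c 0 * (starRingEnd ℂ) (c 0)) * hmul
  · simp [Kdet, psiT, Matrix.mul_apply, Matrix.vecMul, dotProduct,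
      Fin.sum_univ_four, Matrix.vecMulVec_apply, star_mul', Complex.star_def,
      Complex.conj_ofReal, hc1, hc2, h2, h2', h3, h3p]
    linear_combination (c 0 * ((Real.sqrt 3 : ℂ))⁻¹ * (starRingEnd ℂ) (c 3)) * hmul
  · simp [Kdet, psiT, Matrix.mul_apply, Matrix.vecMul, dotProduct,
      Fin.sum_univ_four, Matrix.vecMulVec_apply, star_mul', Complex.star_def,
      Complex.conj_ofReal, hc1, hc2, h2, h2', h3, h3p]
    linear_combination (((Real.sqrt 3 : ℂ))⁻¹ * (starRingEnd ℂ) (c 0) * c 3) * hmul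
  · simp [Kdet, psiT, Matrix.mul_apply, Matrix.vecMul, dotProduct,
      Fin.sum_univ_four, Matrix.vecMulVec_apply, star_mul', Complex.star_def,
      Complex.conj_ofReal, hc1, hc2, h2, h2', h3, h3p]
    linear_combination (3 * (c 1 * (starRingEnd ℂ) (c 1) + c 2 * (starRingEnd ℂ) (c 2) +
        c 3 * (starRingEnd ℂ) (c 3)) * Complex.exp (Complex.I * J * t) *
        Complex.exp (-(Complex.I * J * t))) * h3p +
      (c 1 * (starRingEnd ℂ) (c 1) + c 2 * (starRingEnd ℂ) (c 2) +
        c 3 * (starRingEnd ℂ) (c 3)) * hmul
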